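/- Let X: Ω → ℝ satisfy |X| ≤ C(1 + Σ_{i=1}^m |Z_i|) P-almost surely for some constant C > 0 and random variables Z₁,…,Z_m. Let φ₁*, φ₂*: ℝ → ℝ be nondecreasing convex functions. Then for all θ₁, θ₂ ∈ ℝ, E_P[ φ₂*(θ₁ + φ₁*(θ₂ − X)) ] ≤ (1/m) Σ_{i=1}^m E_P[ φ₂*(θ₁ + φ₁*(θ₂ + C(1 + m|Z_i|))) ]. In particular, if each term on the right is finite, then the left side is finite. -/

import Mathlib

open MeasureTheory

theorem stmt14 {Ω : Type*} [MeasurableSpace Ω] (P : Measure Ω) [IsProbabilityMeasure P]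
    (m : ℕ) (hm : 0 < m) (C : ℝ) (hC : 0 < C)
    (X : Ω → ℝ) (Z : Fin m → Ω → ℝ)
    (hXm : Measurable X) (hZm : ∀ i, Measurable (Z i))
    (hXint : Integrable X P) (hZint : ∀ i, Integrable (Z i) P)
    (hbound : ∀ᵐ ω ∂P, |X ω| ≤ C * (1 + ∑ i, |Z i ω|))
    (φ₁ φ₂ : ℝ → ℝ) (h₁m : Monotone φ₁) (h₂m : Monotone φ₂)
    (h₁c : ConvexOn ℝ Set.univ φ₁) (h₂c : ConvexOn ℝ Set.univ φ₂)
    (θ₁ θ₂ : ℝ)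
    (hRHS : ∀ i, Integrable (fun ω => φ₂ (θ₁ + φ₁ (θ₂ + C * (1 + m * |Z i ω|)))) P) :
    Integrable (fun ω => φ₂ (θ₁ + φ₁ (θ₂ - X ω))) P ∧
    (∫ ω, φ₂ (θ₁ + φ₁ (θ₂ - X ω)) ∂P) ≤
      (1 / (m : ℝ)) * ∑ i, ∫ ω, φ₂ (θ₁ + φ₁ (θ₂ + C * (1 + m * |Z i ω|))) ∂P := by
  set h : ℝ → ℝ := fun t => φ₂ (θ₁ + φ₁ t) with hh
  have hmono : Monotone h := fun a b hab => h₂m (by linarith [h₁m hab])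
  have hconv : ConvexOn ℝ Set.univ h := by
    refine ⟨convex_univ, ?_⟩
    intro x _ y _ a b ha hb hab
    have h1 : φ₁ (a • x + b • y) ≤ a * φ₁ x + b * φ₁ y :=
      h₁c.2 (Set.mem_univ x) (Set.mem_univ y) ha hb hab
    have h2 : θ₁ + φ₁ (a • x + b • y) ≤ a * (θ₁ + φ₁ x) + b * (θ₁ + φ₁ y) := by
      have : a * θ₁ + b * θ₁ = θ₁ := by rw [← add_mul, hab, one_mul]
      nlinarith
    calc h (a • x + b • y) ≤ φ₂ (a * (θ₁ + φ₁ x) + b * (θ₁ + φ₁ y)) := h₂m h2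
      _ = φ₂ (a • (θ₁ + φ₁ x) + b • (θ₁ + φ₁ y)) := rfl
      _ ≤ a • h x + b • h y :=
        h₂c.2 (Set.mem_univ _) (Set.mem_univ _) ha hb hab
  set s : ℝ := h 1 - h 0 with hs
  have hs0 : 0 ≤ s := by
    have := hmono (by norm_num : (0:ℝ) ≤ 1)
    simp [hs]; linarith
  -- affine-type lower bound
  have hlow : ∀ t : ℝ, h 0 - s * |t| ≤ h t := by
    intro t
    rcases le_or_gt 0 t with ht | ht
    · have := hmono ht
      have : 0 ≤ s * |t| := mul_nonneg hs0 (abs_nonneg t)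
      linarith [hmono ht]
    · have h1t : 0 < 1 - t := by linarith
      have ha : 0 ≤ -t / (1 - t) := div_nonneg (by linarith) (le_of_lt h1t)
      have hb : 0 ≤ 1 / (1 - t) := by positivity
      have hab : -t / (1 - t) + 1 / (1 - t) = 1 := by
        field_simp
        ring
      have hx : (-t / (1 - t)) • (1:ℝ) + (1 / (1 - t)) • t = 0 := by
        simp only [smul_eq_mul]; ring
      have := hconv.2 (Set.mem_univ (1:ℝ)) (Set.mem_univ t) ha hb hab
      rw [hx] at this
      have habs : |t| = -t := abs_of_neg ht
      rw [habs]
      have h1t' : (1 - t) ≠ 0 := ne_of_gt h1t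
      -- this : h 0 ≤ (-t/(1-t)) * h 1 + (1/(1-t)) * h t
      have key : (1 - t) * h 0 ≤ (-t) * h 1 + h t := by
        have := mul_le_mul_of_nonneg_left this (le_of_lt h1t)
        calc (1 - t) * h 0 ≤ (1 - t) * ((-t / (1 - t)) * h 1 + (1 / (1 - t)) * h t) := this
          _ = (-t) * h 1 + h t := by field_simp
      nlinarith
  have hmeas : Measurable h := hmono.measurable
  -- pointwise inequality
  have hptwise : ∀ᵐ ω ∂P,
      h (θ₂ - X ω) ≤ ∑ i, (1 / (m:ℝ)) * h (θ₂ + C * (1 + m * |Z i ω|)) := by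
    filter_upwards [hbound] with ω hω
    have step1 : θ₂ - X ω ≤ θ₂ + C * (1 + ∑ i, |Z i ω|) := by
      have := neg_abs_le (X ω)
      linarith
    have hsum : θ₂ + C * (1 + ∑ i, |Z i ω|)
        = ∑ i : Fin m, (1 / (m:ℝ)) • (θ₂ + C * (1 + m * |Z i ω|)) := by
      have hm' : (m:ℝ) ≠ 0 := Nat.cast_ne_zero.mpr hm.ne'
      simp only [smul_eq_mul]
      rw [Finset.sum_congr rfl (fun i _ => by
        field_simp
        ring :
        ∀ i ∈ Finset.univ, (1 / (m:ℝ)) * (θ₂ + C * (1 + m * |Z i ω|))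
          = (1/(m:ℝ)) * (θ₂ + C) + C * |Z i ω|)]
      rw [Finset.sum_add_distrib, Finset.sum_const, ← Finset.mul_sum]
      simp [Finset.card_univ]
      field_simp
      ring
    have step2 := hmono step1
    rw [hsum] at step2
    refine step2.trans ?_
    have := hconv.map_sum_le (t := Finset.univ) (w := fun _ : Fin m => 1 / (m:ℝ))
      (p := fun i => θ₂ + C * (1 + m * |Z i ω|))
      (fun i _ => by positivity)
      (by
        rw [Finset.sum_const, Finset.card_univ, Fintype.card_fin, nsmul_eq_mul]
        exact mul_one_div_cancel (Nat.cast_ne_zero.mpr hm.ne'))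
      (fun i _ => Set.mem_univ _)
    simpa [smul_eq_mul] using this
  -- measurability of f
  have hfm : Measurable (fun ω => h (θ₂ - X ω)) :=
    hmeas.comp ((measurable_const.sub hXm))
  -- integrability of g
  have hgint : Integrable (fun ω => ∑ i, (1 / (m:ℝ)) * h (θ₂ + C * (1 + m * |Z i ω|))) P := by
    apply integrable_finset_sum
    intro i _
    exact ((hRHS i).const_mul _)
  -- lower bound integrable
  have hLint : Integrable (fun ω => h 0 - s * (|θ₂| + |X ω|)) P := by
    apply Integrable.sub (integrable_const _)
    exact (Integrable.const_mul (Integrable.add (integrable_const _) hXint.abs) s)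
  have hlb : ∀ ω, h 0 - s * (|θ₂| + |X ω|) ≤ h (θ₂ - X ω) := by
    intro ω
    have h1 : |θ₂ - X ω| ≤ |θ₂| + |X ω| := abs_sub _ _
    have := hlow (θ₂ - X ω)
    nlinarith [abs_nonneg (θ₂ - X ω)]
  have hfint : Integrable (fun ω => h (θ₂ - X ω)) P := by
    apply Integrable.mono' (hLint.abs.add hgint.abs) hfm.aestronglyMeasurable
    filter_upwards [hptwise] with ω hω
    rw [Real.norm_eq_abs, abs_le]
    constructor
    · have := hlb ω
      have h2 : -(|h 0 - s * (|θ₂| + |X ω|)|) ≤ h 0 - s * (|θ₂| + |X ω|) := neg_abs_le _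
      have h3 : (0:ℝ) ≤ |∑ i, (1 / (m:ℝ)) * h (θ₂ + C * (1 + m * |Z i ω|))| := abs_nonneg _
      simp only [Pi.add_apply, Pi.abs_apply]
      linarith
    · have h2 : ∑ i, (1 / (m:ℝ)) * h (θ₂ + C * (1 + m * |Z i ω|))
          ≤ |∑ i, (1 / (m:ℝ)) * h (θ₂ + C * (1 + m * |Z i ω|))| := le_abs_self _
      have h3 : (0:ℝ) ≤ |h 0 - s * (|θ₂| + |X ω|)| := abs_nonneg _
      simp only [Pi.add_apply, Pi.abs_apply]
      linarith
  refine ⟨hfint, ?_⟩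
  calc (∫ ω, h (θ₂ - X ω) ∂P)
      ≤ ∫ ω, ∑ i, (1 / (m:ℝ)) * h (θ₂ + C * (1 + m * |Z i ω|)) ∂P :=
        integral_mono_ae hfint hgint hptwise
    _ = ∑ i, ∫ ω, (1 / (m:ℝ)) * h (θ₂ + C * (1 + m * |Z i ω|)) ∂P :=
        integral_finset_sum _ (fun i _ => (hRHS i).const_mul _)
    _ = (1 / (m:ℝ)) * ∑ i, ∫ ω, h (θ₂ + C * (1 + m * |Z i ω|)) ∂P := by
        rw [Finset.mul_sum]
        exact Finset.sum_congr rfl (fun i _ => integral_const_mul _ _)
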